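/- Let a : ℝⁿ → ℝⁿ be measurable with (1+|x|)^{n+1+m} |a(x)| bounded, satisfying additionally lim_{|x|→∞} (1+|x|)^{n+1+m} |a(x)| = 0. Then for each T > 0, the heat evolution u(x,t) = (g_t * a)(x) satisfies lim_{|x|→∞} sup_{t∈[0,T]} (1+|x|)^{n+1+m} |u(x,t)| = 0. -/

import Mathlib

open MeasureTheory Real Filter

/-- The Gaussian heat kernel on ℝⁿ. -/
noncomputable def heatKernel (n : ℕ) (t : ℝ) (x : EuclideanSpace ℝ (Fin n)) : ℝ :=
  (4 * Real.pi * t) ^ (-(n : ℝ) / 2) * Real.exp (-‖x‖ ^ 2 / (4 * t))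

lemma heatKernel_nonneg (n : ℕ) {t : ℝ} (ht : 0 < t) (x : EuclideanSpace ℝ (Fin n)) :
    0 ≤ heatKernel n t x := by
  unfold heatKernel
  have : (0:ℝ) < 4 * Real.pi * t := by positivity
  positivity

lemma heatKernel_eq (n : ℕ) (t : ℝ) (x : EuclideanSpace ℝ (Fin n)) :
    heatKernel n t x = (4 * Real.pi * t) ^ (-(n : ℝ) / 2) * Real.exp (-(4*t)⁻¹ * ‖x‖ ^ 2) := by
  unfold heatKernel
  have h : -‖x‖ ^ 2 / (4*t) = -(4*t)⁻¹ * ‖x‖ ^ 2 := by ring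
  rw [h]

lemma heatKernel_integral (n : ℕ) {t : ℝ} (ht : 0 < t) :
    ∫ z : EuclideanSpace ℝ (Fin n), heatKernel n t z = 1 := by
  have hb : (0:ℝ) < (4*t)⁻¹ := by positivity
  have key := GaussianFourier.integral_rexp_neg_mul_sq_norm (V := EuclideanSpace ℝ (Fin n)) hb
  simp_rw [heatKernel_eq]
  rw [integral_const_mul, key, finrank_euclideanSpace_fin]
  have h2 : Real.pi / (4*t)⁻¹ = 4*Real.pi*t := by field_simp
  rw [h2, ← Real.rpow_add (by positivity), neg_div, neg_add_cancel, Real.rpow_zero]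

lemma integrable_heatKernel (n : ℕ) {t : ℝ} (ht : 0 < t) :
    Integrable (heatKernel n t) := by
  have hb : (0:ℝ) < (4*t)⁻¹ := by positivity
  have h2 := (GaussianFourier.integrable_cexp_neg_mul_sq_norm_add
    (V := EuclideanSpace ℝ (Fin n)) (b := ((4*t)⁻¹ : ℂ)) (by simpa) 0 0).norm
  have h : Integrable (fun v : EuclideanSpace ℝ (Fin n) => Real.exp (-(4*t)⁻¹ * ‖v‖^2)) := by
    refine h2.congr (Eventually.of_forall fun v => ?_)
    simp [Complex.norm_exp]
    left; norm_cast
  exact (h.const_mul _).congr (ae_of_all _ fun v => (heatKernel_eq n t v).symm)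

lemma rpow_neg_half_le {b : ℝ} (hb : 0 < b) (n : ℕ) :
    b ^ (-(n:ℝ)/2) ≤ 1 + (b ^ n)⁻¹ := by
  rcases le_total 1 b with h | h
  · have h1 : b ^ (-(n:ℝ)/2) ≤ 1 := by
      apply Real.rpow_le_one_of_one_le_of_nonpos h
      have : (0:ℝ) ≤ (n:ℝ) := n.cast_nonneg
      linarith
    have h2 : (0:ℝ) ≤ (b ^ n)⁻¹ := by positivity
    linarith
  · have h2 : b ^ (-(n:ℝ)/2) ≤ b ^ (-(n:ℝ)) := by
      apply Real.rpow_le_rpow_of_exponent_ge hb h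
      have : (0:ℝ) ≤ (n:ℝ) := n.cast_nonneg
      linarith
    rw [Real.rpow_neg hb.le, Real.rpow_natCast] at h2
    linarith


lemma exp_neg_le_factorial (k : ℕ) {u : ℝ} (hu : 0 < u) :
    Real.exp (-u) ≤ k.factorial * (u⁻¹) ^ k := by
  have h1 : u ^ k / k.factorial ≤ Real.exp u := by
    calc u ^ k / (k.factorial : ℝ)
        ≤ ∑ i ∈ Finset.range (k+1), u ^ i / i.factorial := by
          refine Finset.single_le_sum (f := fun i => u ^ i / (i.factorial : ℝ))
            (fun i _ => by positivity) (Finset.self_mem_range_succ k)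
      _ ≤ Real.exp u := Real.sum_le_exp_of_nonneg hu.le _
  have h2 : (0:ℝ) < u ^ k / k.factorial := by positivity
  rw [Real.exp_neg]
  calc (Real.exp u)⁻¹ ≤ (u ^ k / k.factorial)⁻¹ := inv_anti₀ h2 h1
    _ = k.factorial * (u⁻¹) ^ k := by
        rw [inv_div, div_eq_mul_inv, inv_pow]

lemma heat_coef_bound (n N : ℕ) {t T r : ℝ} (ht : 0 < t) (htT : t ≤ T) (hr : 1 ≤ r) :
    (1 + ((4*Real.pi*t)^n)⁻¹) * Real.exp (-r^2/(16*t)) ≤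
      ((n+N).factorial * (16*T)^(n+N) + 16^(n+N) * (n+N).factorial / (4^n * Real.pi^n) * T^N)
        / r^(2*(n+N)) := by
  have hπ := Real.pi_pos
  have hr0 : (0:ℝ) < r := by linarith
  have hu : (0:ℝ) < r^2/(16*t) := by positivity
  have hexp : Real.exp (-r^2/(16*t)) ≤ (n+N).factorial * ((16*t)/r^2)^(n+N) := by
    have := exp_neg_le_factorial (n+N) hu
    rw [inv_div] at this
    have he : -r^2/(16*t) = -(r^2/(16*t)) := by ring
    rwa [he]
  have h0 : (0:ℝ) ≤ 1 + ((4*Real.pi*t)^n)⁻¹ := by positivity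
  calc (1 + ((4*Real.pi*t)^n)⁻¹) * Real.exp (-r^2/(16*t))
      ≤ (1 + ((4*Real.pi*t)^n)⁻¹) * ((n+N).factorial * ((16*t)/r^2)^(n+N)) :=
        mul_le_mul_of_nonneg_left hexp h0
    _ = (n+N).factorial * (16*t)^(n+N) / r^(2*(n+N))
        + 16^(n+N) * (n+N).factorial / (4^n * Real.pi^n) * t^N / r^(2*(n+N)) := by
        rw [div_pow, ← pow_mul]
        field_simp
        ring
    _ ≤ (n+N).factorial * (16*T)^(n+N) / r^(2*(n+N))
        + 16^(n+N) * (n+N).factorial / (4^n * Real.pi^n) * T^N / r^(2*(n+N)) := by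
        gcongr <;> linarith
    _ = _ := by rw [add_div]

set_option maxHeartbeats 1000000
lemma heat_key (n m : ℕ) (hn : 1 ≤ n) (T : ℝ) (hT : 0 < T)
    (a : EuclideanSpace ℝ (Fin n) → EuclideanSpace ℝ (Fin n)) (hmeas : Measurable a)
    (C : ℝ) (hbd : ∀ x, (1 + ‖x‖) ^ (n + 1 + m) * ‖a x‖ ≤ C) :
    ∃ D : ℝ, 0 ≤ D ∧ ∀ δ R₁ : ℝ, 0 ≤ δ →
      (∀ y : EuclideanSpace ℝ (Fin n), R₁ ≤ ‖y‖ → (1 + ‖y‖) ^ (n + 1 + m) * ‖a y‖ ≤ δ) →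
      ∀ x : EuclideanSpace ℝ (Fin n), 1 ≤ ‖x‖ → 2 * R₁ ≤ ‖x‖ →
      ∀ t : ℝ, t ∈ Set.Ioc (0:ℝ) T →
      (1 + ‖x‖) ^ (n + 1 + m) * ‖∫ y, heatKernel n t (x - y) • a y‖ ≤
        D / ‖x‖ + 2 ^ (n + 1 + m) * δ := by
  set N := n + 1 + m with hN
  clear_value N
  have hπ := Real.pi_pos
  have hC : 0 ≤ C := le_trans (by positivity) (hbd 0)
  have hNr : (Module.finrank ℝ (EuclideanSpace ℝ (Fin n)) : ℝ) < (N:ℝ) := by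
    rw [finrank_euclideanSpace_fin]
    exact_mod_cast (by omega : n < N)

  have hint0 : Integrable (fun y : EuclideanSpace ℝ (Fin n) => (1+‖y‖) ^ (-(N:ℝ))) :=
    integrable_one_add_norm hNr
  have haInt : Integrable (fun y => ‖a y‖) := by
    refine (hint0.const_mul C).mono' hmeas.norm.aestronglyMeasurable
      (ae_of_all _ fun y => ?_)
    rw [Real.norm_of_nonneg (norm_nonneg _),
      Real.rpow_neg (by positivity), Real.rpow_natCast, ← div_eq_mul_inv,
      le_div_iff₀ (by positivity)]
    calc ‖a y‖ * (1+‖y‖)^N = (1+‖y‖)^N * ‖a y‖ := mul_comm _ _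
      _ ≤ C := hbd y
  set A := ∫ y, ‖a y‖ with hA
  clear_value A
  have hA0 : 0 ≤ A := by
    rw [hA]; exact integral_nonneg fun y => norm_nonneg _
  set E₀ := ((n+N).factorial : ℝ) * (16*T)^(n+N)
    + 16^(n+N) * (n+N).factorial / (4^n * Real.pi^n) * T^N with hE₀
  clear_value E₀
  have hE₀0 : 0 ≤ E₀ := by rw [hE₀]; positivity
  refine ⟨2^N * E₀ * A, by positivity, ?_⟩
  intro δ R₁ hδ hR x hx1 hx2 t htm
  obtain ⟨ht0, htT⟩ := htm
  set r := ‖x‖ with hr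
  clear_value r
  have hr0 : (0:ℝ) < r := by linarith
  have h4t : (0:ℝ) < 4*Real.pi*t := by positivity
  have h4tn : (0:ℝ) ≤ ((4*Real.pi*t)^n)⁻¹ := inv_nonneg.mpr (pow_nonneg h4t.le n)
  have hker_cont : Continuous (heatKernel n t) := by
    unfold heatKernel
    exact continuous_const.mul (Real.continuous_exp.comp
      ((continuous_norm.pow 2).neg.div_const _))
  have hker_int : Integrable (fun y => heatKernel n t (x - y)) :=
    (integrable_heatKernel n ht0).comp_sub_left x
  have habd : ∀ y : EuclideanSpace ℝ (Fin n), ‖a y‖ ≤ C := fun y => by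
    have h1 : ‖a y‖ ≤ (1+‖y‖)^N * ‖a y‖ :=
      le_mul_of_one_le_left (norm_nonneg _)
        (one_le_pow₀ (by linarith [norm_nonneg y] : (1:ℝ) ≤ 1 + ‖y‖))
    linarith [hbd y]
  have hhInt : Integrable (fun y => heatKernel n t (x - y) * ‖a y‖) := by
    refine (hker_int.mul_const C).mono'
      (((hker_cont.comp (continuous_const.sub continuous_id)).measurable.mul
        hmeas.norm).aestronglyMeasurable)
      (ae_of_all _ fun y => ?_)
    rw [Real.norm_of_nonneg (mul_nonneg (heatKernel_nonneg n ht0 _) (norm_nonneg _))]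
    exact mul_le_mul_of_nonneg_left (habd y) (heatKernel_nonneg n ht0 _)
  have hstep1 : ‖∫ y, heatKernel n t (x - y) • a y‖
      ≤ ∫ y, heatKernel n t (x - y) * ‖a y‖ := by
    refine le_trans (norm_integral_le_integral_norm _) (le_of_eq ?_)
    refine integral_congr_ae (ae_of_all _ fun y => ?_)
    show ‖heatKernel n t (x - y) • a y‖ = heatKernel n t (x - y) * ‖a y‖
    rw [norm_smul, Real.norm_of_nonneg (heatKernel_nonneg n ht0 _)]
  set s := Metric.closedBall (0 : EuclideanSpace ℝ (Fin n)) (r/2) with hs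
  clear_value s
  have hsm : MeasurableSet s := by rw [hs]; exact measurableSet_closedBall
  have hsplit : ∫ y, heatKernel n t (x - y) * ‖a y‖
      = (∫ y in s, heatKernel n t (x - y) * ‖a y‖)
        + ∫ y in sᶜ, heatKernel n t (x - y) * ‖a y‖ := by
    exact (integral_add_compl hsm hhInt).symm
  set c₁ := (1 + ((4*Real.pi*t)^n)⁻¹) * Real.exp (-r^2/(16*t)) with hc₁
  clear_value c₁
  have hc₁0 : 0 ≤ c₁ := by
    rw [hc₁]; exact mul_nonneg (by linarith) (Real.exp_nonneg _)
  have hnear : ∫ y in s, heatKernel n t (x - y) * ‖a y‖ ≤ c₁ * A := by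
    have hpt : ∀ y ∈ s, heatKernel n t (x - y) * ‖a y‖ ≤ c₁ * ‖a y‖ := by
      intro y hy
      refine mul_le_mul_of_nonneg_right ?_ (norm_nonneg _)
      have hy' : ‖y‖ ≤ r/2 := by
        rw [hs, Metric.mem_closedBall, dist_zero_right] at hy; exact hy
      have h1 : r/2 ≤ ‖x - y‖ := by
        have h := norm_sub_norm_le x y
        rw [← hr] at h
        linarith
      have h1' : r^2/4 ≤ ‖x - y‖^2 := by nlinarith [h1, hr0, norm_nonneg (x-y)]
      have h2 : -‖x - y‖^2/(4*t) ≤ -r^2/(16*t) := by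
        rw [div_le_div_iff₀ (by positivity) (by positivity)]
        nlinarith [h1', ht0]
      rw [hc₁]
      unfold heatKernel
      exact mul_le_mul (rpow_neg_half_le h4t n) (Real.exp_le_exp.mpr h2)
        (Real.exp_nonneg _) (by linarith)
    calc ∫ y in s, heatKernel n t (x - y) * ‖a y‖
        ≤ ∫ y in s, c₁ * ‖a y‖ := setIntegral_mono_on hhInt.integrableOn
          (haInt.const_mul c₁).integrableOn hsm hpt
      _ ≤ ∫ y, c₁ * ‖a y‖ := setIntegral_le_integral (haInt.const_mul c₁)
          (ae_of_all _ fun y => by positivity)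
      _ = c₁ * A := by rw [hA]; exact integral_const_mul _ _
  set c₂ := 2^N * δ / (1+r)^N with hc₂
  clear_value c₂
  have hc₂0 : 0 ≤ c₂ := by
    rw [hc₂]
    exact div_nonneg (mul_nonneg (by positivity) hδ) (by positivity)
  have hfar : ∫ y in sᶜ, heatKernel n t (x - y) * ‖a y‖ ≤ c₂ := by
    have hpt : ∀ y ∈ sᶜ, heatKernel n t (x - y) * ‖a y‖ ≤ c₂ * heatKernel n t (x - y) := by
      intro y hy
      have hy' : r/2 < ‖y‖ := by
        rw [hs, Set.mem_compl_iff, Metric.mem_closedBall, dist_zero_right] at hy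
        exact not_le.mp hy
      have hyR : R₁ ≤ ‖y‖ := by linarith
      have hab := hR y hyR
      have h12 : (1+r)^N ≤ 2^N * (1+‖y‖)^N := by
        rw [← mul_pow]
        apply pow_le_pow_left₀ (by linarith) (by linarith)
      have hya : ‖a y‖ ≤ c₂ := by
        rw [hc₂, le_div_iff₀ (by positivity)]
        calc ‖a y‖ * (1+r)^N ≤ ‖a y‖ * (2^N * (1+‖y‖)^N) :=
            mul_le_mul_of_nonneg_left h12 (norm_nonneg _)
          _ = 2^N * ((1+‖y‖)^N * ‖a y‖) := by ring
          _ ≤ 2^N * δ := mul_le_mul_of_nonneg_left hab (by positivity)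
      calc heatKernel n t (x - y) * ‖a y‖ ≤ heatKernel n t (x - y) * c₂ :=
          mul_le_mul_of_nonneg_left hya (heatKernel_nonneg n ht0 _)
        _ = c₂ * heatKernel n t (x - y) := mul_comm _ _
    calc ∫ y in sᶜ, heatKernel n t (x - y) * ‖a y‖
        ≤ ∫ y in sᶜ, c₂ * heatKernel n t (x - y) := setIntegral_mono_on hhInt.integrableOn
          (hker_int.const_mul c₂).integrableOn hsm.compl hpt
      _ ≤ ∫ y, c₂ * heatKernel n t (x - y) := setIntegral_le_integral
          (hker_int.const_mul c₂)
          (ae_of_all _ fun y => mul_nonneg hc₂0 (heatKernel_nonneg n ht0 _))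
      _ = c₂ * ∫ y, heatKernel n t (x - y) := integral_const_mul _ _
      _ = c₂ := by
          rw [integral_sub_left_eq_self (heatKernel n t) volume x,
            heatKernel_integral n ht0, mul_one]
  have hmain : (1+r)^N * ‖∫ y, heatKernel n t (x - y) • a y‖
      ≤ (1+r)^N * (c₁*A) + (1+r)^N * c₂ := by
    calc (1+r)^N * ‖∫ y, heatKernel n t (x - y) • a y‖
        ≤ (1+r)^N * ((∫ y in s, heatKernel n t (x-y) * ‖a y‖)
            + ∫ y in sᶜ, heatKernel n t (x-y) * ‖a y‖) := by
          rw [← hsplit]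
          exact mul_le_mul_of_nonneg_left hstep1 (by positivity)
      _ ≤ (1+r)^N * (c₁*A + c₂) :=
          mul_le_mul_of_nonneg_left (add_le_add hnear hfar) (by positivity)
      _ = _ := by ring
  have hfar2 : (1+r)^N * c₂ = 2^N * δ := by
    rw [hc₂]
    field_simp
  have hnear2 : (1+r)^N * (c₁*A) ≤ (2^N * E₀ * A)/r := by
    have hcoef : c₁ ≤ E₀ / r^(2*(n+N)) := by
      rw [hc₁, hE₀]; exact heat_coef_bound n N ht0 htT hx1
    have hb1 : (1+r)^N ≤ 2^N*r^N := by
      rw [← mul_pow]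
      exact pow_le_pow_left₀ (by positivity) (by linarith) N
    have hb2 : c₁ * A ≤ (E₀ / r^(2*(n+N))) * A := mul_le_mul_of_nonneg_right hcoef hA0
    have hb3 : (1+r)^N * (c₁*A) ≤ (2^N*r^N) * ((E₀/r^(2*(n+N)))*A) :=
      mul_le_mul hb1 hb2 (mul_nonneg hc₁0 hA0) (by positivity)
    have hb4 : r^N / r^(2*(n+N)) ≤ 1/r := by
      rw [div_le_div_iff₀ (by positivity) hr0, one_mul, ← pow_succ]
      exact pow_le_pow_right₀ hx1 (by omega)
    calc (1+r)^N * (c₁*A) ≤ (2^N*r^N) * ((E₀/r^(2*(n+N)))*A) := hb3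
      _ = 2^N * E₀ * A * (r^N/r^(2*(n+N))) := by ring
      _ ≤ 2^N * E₀ * A * (1/r) := mul_le_mul_of_nonneg_left hb4 (by positivity)
      _ = (2^N * E₀ * A)/r := by ring
  linarith [hmain, hnear2, hfar2]

/-- If (1+|x|)^{n+1+m}|a(x)| is bounded and tends to 0 as |x| → ∞, then for
each T > 0 the heat evolution u(x,t) = (g_t * a)(x) satisfies
lim_{|x|→∞} sup_{t∈(0,T]} (1+|x|)^{n+1+m}|u(x,t)| = 0. -/
theorem heat_semigroup_decay_preserved (n m : ℕ) (hn : 1 ≤ n) (T : ℝ) (hT : 0 < T)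
    (a : EuclideanSpace ℝ (Fin n) → EuclideanSpace ℝ (Fin n)) (hmeas : Measurable a)
    (C : ℝ) (hbd : ∀ x, (1 + ‖x‖) ^ (n + 1 + m) * ‖a x‖ ≤ C)
    (hdecay : Tendsto (fun x : EuclideanSpace ℝ (Fin n) =>
        (1 + ‖x‖) ^ (n + 1 + m) * ‖a x‖)
      (cocompact (EuclideanSpace ℝ (Fin n))) (nhds 0)) :
    Tendsto (fun x : EuclideanSpace ℝ (Fin n) =>
        ⨆ t ∈ Set.Ioc (0 : ℝ) T,
          (1 + ‖x‖) ^ (n + 1 + m) * ‖∫ y, heatKernel n t (x - y) • a y‖)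
      (cocompact (EuclideanSpace ℝ (Fin n))) (nhds 0) := by
  obtain ⟨D, hD0, hkey⟩ := heat_key n m hn T hT a hmeas C hbd
  rw [Metric.tendsto_nhds]
  intro ε hε
  -- choose δ
  have hδpos : 0 < ε/4/2^(n+1+m) := by positivity
  -- get R₁ from hdecay
  have hd := Metric.tendsto_nhds.mp hdecay _ hδpos
  rw [Filter.hasBasis_cocompact.eventually_iff] at hd
  obtain ⟨K, hK, hKsub⟩ := hd
  obtain ⟨R₀, hR₀⟩ := hK.isBounded.subset_closedBall 0
  set R₁ := max R₀ 0 + 1 with hR₁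
  have hR : ∀ y : EuclideanSpace ℝ (Fin n), R₁ ≤ ‖y‖ →
      (1 + ‖y‖) ^ (n + 1 + m) * ‖a y‖ ≤ ε/4/2^(n+1+m) := by
    intro y hy
    have hyK : y ∉ K := by
      intro hCon
      have h2 := hR₀ hCon
      rw [Metric.mem_closedBall, dist_zero_right] at h2
      have : R₀ ≤ max R₀ 0 := le_max_left _ _
      linarith
    have h3 := hKsub hyK
    rw [Real.dist_eq, sub_zero, abs_of_nonneg (by positivity)] at h3
    exact h3.le
  -- eventually ‖x‖ large
  set M := max (max 1 (2*R₁)) (4*D/ε + 1) with hM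
  filter_upwards [tendsto_norm_cocompact_atTop.eventually_ge_atTop M] with x hx
  have hx1 : 1 ≤ ‖x‖ := le_trans (le_trans (le_max_left _ _) (le_max_left _ _)) hx
  have hx2 : 2*R₁ ≤ ‖x‖ := le_trans (le_trans (le_max_right _ _) (le_max_left _ _)) hx
  have hx3 : 4*D/ε + 1 ≤ ‖x‖ := le_trans (le_max_right _ _) hx
  have hx0 : (0:ℝ) < ‖x‖ := by linarith
  have hDx : D / ‖x‖ ≤ ε/4 := by
    rw [div_le_iff₀ hx0]
    have h4 : ε/4 * (4*D/ε + 1) ≤ ε/4 * ‖x‖ := by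
      apply mul_le_mul_of_nonneg_left hx3 (by positivity)
    have h5 : ε/4 * (4*D/ε + 1) = D + ε/4 := by field_simp
    linarith
  have hbound : ∀ t ∈ Set.Ioc (0:ℝ) T,
      (1 + ‖x‖) ^ (n + 1 + m) * ‖∫ y, heatKernel n t (x - y) • a y‖ ≤ ε/4 + ε/4 := by
    intro t ht
    have := hkey _ R₁ hδpos.le hR x hx1 hx2 t ht
    have h6 : (2:ℝ)^(n+1+m) * (ε/4/2^(n+1+m)) = ε/4 := by
      field_simp
    linarith
  have hB : (0:ℝ) ≤ ε/4 + ε/4 := by positivity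
  have hsup_le : (⨆ t ∈ Set.Ioc (0:ℝ) T,
      (1 + ‖x‖) ^ (n + 1 + m) * ‖∫ y, heatKernel n t (x - y) • a y‖) ≤ ε/4 + ε/4 := by
    refine Real.iSup_le (fun t => Real.iSup_le (fun ht => hbound t ht) hB) hB
  have hsup_nonneg : 0 ≤ ⨆ t ∈ Set.Ioc (0:ℝ) T,
      (1 + ‖x‖) ^ (n + 1 + m) * ‖∫ y, heatKernel n t (x - y) • a y‖ := by
    refine Real.iSup_nonneg (fun t => Real.iSup_nonneg (fun ht => by positivity))
  rw [Real.dist_eq, sub_zero, abs_of_nonneg hsup_nonneg]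
  linarith
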